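/- Let A be a left brace of cardinality p^n with p prime and p > n+1. Then for every natural number i, the set ann(p^i) = {a ∈ A : p^i·a = 0} (elements whose additive order divides p^i) is an ideal of the brace A. -/

import Mathlib

class LeftBrace (A : Type*) extends AddCommGroup A where
  circ : A → A → A
  circ_assoc : ∀ a b c : A, circ (circ a b) c = circ a (circ b c)
  circ_zero : ∀ a : A, circ a 0 = a
  zero_circ : ∀ a : A, circ 0 a = a
  inv : A → A
  circ_inv : ∀ a : A, circ a (inv a) = 0
  inv_circ : ∀ a : A, circ (inv a) a = 0
  circ_add : ∀ a b c : A, circ a (b + c) + a = circ a b + circ a c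

namespace LeftBrace

variable {A : Type*} [LeftBrace A]

def star (a b : A) : A := circ a b - a - b

def subStarSet (S T : Set A) : AddSubgroup A :=
  AddSubgroup.closure {x | ∃ a ∈ S, ∃ b ∈ T, x = star a b}

def subStar (S T : AddSubgroup A) : AddSubgroup A := subStarSet (S : Set A) (T : Set A)

/-- `leftPow A m` is `A^{m+1}` of the left chain `A^1 = A`, `A^{i+1} = A * A^i`. -/
def leftPow (A : Type*) [LeftBrace A] : ℕ → AddSubgroup A
  | 0 => ⊤
  | m + 1 => subStar ⊤ (leftPow A m)

def leftIdx (A : Type*) [LeftBrace A] (m : ℕ) : AddSubgroup A := leftPow A (m - 1)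

/-- `rightPow A m` is `A^{(m+1)}` of the right chain `A^{(1)} = A`, `A^{(i+1)} = A^{(i)} * A`. -/
def rightPow (A : Type*) [LeftBrace A] : ℕ → AddSubgroup A
  | 0 => ⊤
  | m + 1 => subStar (rightPow A m) ⊤

def rightIdx (A : Type*) [LeftBrace A] (m : ℕ) : AddSubgroup A := rightPow A (m - 1)

def strongPow (A : Type*) [LeftBrace A] : ℕ → AddSubgroup A
  | 0 => ⊤
  | m + 1 => ⨆ j : Fin (m + 1), subStar (strongPow A j) (strongPow A (m - j))
  termination_by m => m
  decreasing_by
  · exact j.isLt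
  · exact Nat.lt_succ_of_le (Nat.sub_le m j)

def strongIdx (A : Type*) [LeftBrace A] (m : ℕ) : AddSubgroup A := strongPow A (m - 1)

/-- An ideal of a left brace, as a subset: closed under the additive group
operations, absorbing under `*` on both sides, and normal in `(A, ∘)`. -/
def IsIdeal (I : Set A) : Prop :=
  (0 : A) ∈ I ∧ (∀ x ∈ I, ∀ y ∈ I, x + y ∈ I) ∧ (∀ x ∈ I, -x ∈ I) ∧
  (∀ a : A, ∀ i ∈ I, star a i ∈ I) ∧ (∀ a : A, ∀ i ∈ I, star i a ∈ I) ∧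
  (∀ a : A, ∀ i ∈ I, circ (circ a i) (inv a) ∈ I)

/-- `circPow a m` is the product of `m` copies of `a` in the group `(A, ∘)`. -/
def circPow (a : A) : ℕ → A
  | 0 => 0
  | m + 1 => circ a (circPow a m)

/-- Membership in the subgroup of `(A, ∘)` generated by a subset. -/
inductive circClosure (S : Set A) : A → Prop
  | of : ∀ x ∈ S, circClosure S x
  | zero : circClosure S 0
  | mul : ∀ x y : A, circClosure S x → circClosure S y → circClosure S (circ x y)
  | inv : ∀ x : A, circClosure S x → circClosure S (inv x)

end LeftBrace
section Basics

namespace LeftBrace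

variable {A : Type*} [LeftBrace A]

/-- The lambda map `b ↦ a ∘ b - a`, as an additive homomorphism. -/
def lamHom (a : A) : A →+ A where
  toFun b := circ a b - a
  map_zero' := by show circ a 0 - a = 0; rw [circ_zero]; abel
  map_add' b c := by
    show circ a (b + c) - a = (circ a b - a) + (circ a c - a)
    have h := circ_add a b c
    have h2 : circ a (b + c) = circ a b + circ a c - a := by
      rw [← h]; abel
    rw [h2]; abel

lemma star_eq (a b : A) : star a b = lamHom a b - b := by
  simp only [star, lamHom, AddMonoidHom.coe_mk, ZeroHom.coe_mk]

lemma circ_eq (a b : A) : circ a b = a + lamHom a b := by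
  simp only [lamHom, AddMonoidHom.coe_mk, ZeroHom.coe_mk]; abel

lemma lamHom_circ (a b : A) (c : A) : lamHom (circ a b) c = lamHom a (lamHom b c) := by
  have h1 : lamHom b c = circ b c - b := rfl
  rw [h1, map_sub]
  simp only [lamHom, AddMonoidHom.coe_mk, ZeroHom.coe_mk]
  rw [circ_assoc]; abel

/-- The star map `b ↦ a * b`, as an additive homomorphism. -/
def starHom (a : A) : A →+ A := lamHom a - AddMonoidHom.id A

lemma starHom_apply (a b : A) : starHom a b = star a b := by
  simp only [starHom, AddMonoidHom.sub_apply, AddMonoidHom.id_apply, star_eq]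

lemma star_zero_left (c : A) : star 0 c = 0 := by
  simp [star, zero_circ]

lemma star_zero_right (a : A) : star a 0 = 0 := by
  simp [star, circ_zero]

lemma star_circ (a b c : A) :
    star (circ a b) c = star a (star b c) + star a c + star b c := by
  simp only [star_eq, map_sub, lamHom_circ]
  abel

end LeftBrace

end Basics
section Sums

namespace LeftBrace

variable {A : Type*} [LeftBrace A]

lemma rec_sum (f : A →+ A) (v : A) (u : ℕ → A) (h0 : u 0 = 0)
    (hs : ∀ m, u (m + 1) = v + u m + f (u m)) (m : ℕ) :
    u m = ∑ k ∈ Finset.range m, (m.choose (k + 1)) • (⇑f)^[k] v := by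
  induction m with
  | zero => simpa using h0
  | succ m ih =>
    rw [hs, ih, map_sum]
    have h1 : ∀ k ∈ Finset.range (m + 1),
        ((m + 1).choose (k + 1)) • (⇑f)^[k] v
          = (m.choose k) • (⇑f)^[k] v + (m.choose (k + 1)) • (⇑f)^[k] v := by
      intro k _
      rw [Nat.choose_succ_succ, add_smul]
    rw [Finset.sum_congr rfl h1, Finset.sum_add_distrib, Finset.sum_range_succ',
      Finset.sum_range_succ (fun k => (m.choose (k + 1)) • (⇑f)^[k] v),
      Nat.choose_succ_self, zero_smul, add_zero]
    have h2 : ∀ k ∈ Finset.range m,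
        f ((m.choose (k + 1)) • (⇑f)^[k] v) = (m.choose (k + 1)) • (⇑f)^[k+1] v := by
      intro k _
      rw [map_nsmul, Function.iterate_succ_apply']
    rw [Finset.sum_congr rfl h2]
    simp only [Nat.choose_zero_right, one_smul, Function.iterate_zero_apply]
    abel

lemma circ_eq' (a b : A) : circ a b = a + b + starHom a b := by
  rw [starHom_apply, star]; abel

lemma circPow_eq (a : A) (m : ℕ) :
    circPow a m = ∑ k ∈ Finset.range m, (m.choose (k + 1)) • (⇑(starHom a))^[k] a := by
  refine rec_sum (starHom a) a (circPow a) rfl (fun m => ?_) m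
  show circ a (circPow a m) = _
  rw [circ_eq']

lemma star_circPow (a c : A) (m : ℕ) :
    star (circPow a m) c
      = ∑ k ∈ Finset.range m, (m.choose (k + 1)) • (⇑(starHom a))^[k] (star a c) := by
  refine rec_sum (starHom a) (star a c) (fun m => star (circPow a m) c) ?_ (fun m => ?_) m
  · exact star_zero_left c
  · show star (circ a (circPow a m)) c = _
    rw [star_circ, starHom_apply]
    abel

lemma pow_dvd_choose {p : ℕ} (hp : p.Prime) (i k : ℕ) (h1 : 1 ≤ k) (h2 : k < p) :
    p ^ i ∣ (p ^ i).choose k := by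
  obtain ⟨k, rfl⟩ : ∃ k', k = k' + 1 := ⟨k - 1, by omega⟩
  have hpos : 1 ≤ p ^ i := Nat.one_le_pow _ _ hp.pos
  have key : p ^ i * (p ^ i - 1).choose k = (p ^ i).choose (k + 1) * (k + 1) := by
    have := Nat.add_one_mul_choose_eq (p ^ i - 1) k
    rwa [Nat.sub_add_cancel hpos] at this
  have hcop : Nat.Coprime (p ^ i) (k + 1) := by
    refine Nat.Coprime.pow_left _ ?_
    rw [hp.coprime_iff_not_dvd]
    intro hdvd
    exact absurd (Nat.le_of_dvd (Nat.succ_pos k) hdvd) (not_le.mpr (by omega))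
  exact hcop.dvd_of_dvd_mul_right ⟨_, key.symm⟩

end LeftBrace

end Sums
section LeftPowLemmas

namespace LeftBrace

variable {A : Type*} [LeftBrace A]

lemma leftPow_succ_le (m : ℕ) : leftPow A (m + 1) ≤ leftPow A m := by
  induction m with
  | zero => exact le_top
  | succ m ih =>
    show subStar ⊤ (leftPow A (m + 1)) ≤ subStar ⊤ (leftPow A m)
    refine AddSubgroup.closure_mono ?_
    rintro x ⟨a, ha, b, hb, rfl⟩
    exact ⟨a, ha, b, ih hb, rfl⟩

lemma leftPow_le_of_le {m m' : ℕ} (h : m ≤ m') : leftPow A m' ≤ leftPow A m := by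
  induction m' with
  | zero => rw [Nat.le_zero.mp h]
  | succ m' ih =>
    rcases Nat.lt_or_ge m (m' + 1) with h' | h'
    · exact (leftPow_succ_le m').trans (ih (Nat.lt_succ_iff.mp h'))
    · rw [le_antisymm h h']

lemma star_mem_leftPow_succ (a : A) {b : A} {m : ℕ} (hb : b ∈ leftPow A m) :
    star a b ∈ leftPow A (m + 1) :=
  AddSubgroup.subset_closure ⟨a, trivial, b, hb, rfl⟩

lemma starHom_iterate_mem (x b : A) (k : ℕ) : (⇑(starHom x))^[k] b ∈ leftPow A k := by
  induction k with
  | zero => trivial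
  | succ k ih =>
    rw [Function.iterate_succ_apply', starHom_apply]
    exact star_mem_leftPow_succ x ih

lemma lamHom_mem_leftPow (c : A) {m : ℕ} {x : A} (hx : x ∈ leftPow A m) :
    lamHom c x ∈ leftPow A m := by
  cases m with
  | zero => trivial
  | succ m =>
    have key : subStar ⊤ (leftPow A m) ≤ (leftPow A (m + 1)).comap (lamHom c) := by
      refine (AddSubgroup.closure_le _).mpr ?_
      rintro x ⟨a, -, b, hb, rfl⟩
      simp only [SetLike.mem_coe, AddSubgroup.mem_comap]
      have : lamHom c (star a b) = star (circ c a) b - star c b := by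
        rw [star_eq, map_sub, ← lamHom_circ, star_eq, star_eq]
        abel
      rw [this]
      exact sub_mem (star_mem_leftPow_succ _ hb) (star_mem_leftPow_succ _ hb)
    exact key hx

end LeftBrace

end LeftPowLemmas
section Coinv

open MulAction AddSubgroup

lemma coinvariants_ne_top {p : ℕ} (hp : p.Prime) {G : Type*} [Group G] (hG : IsPGroup p G) :
    ∀ (k : ℕ) (M : Type*) [AddCommGroup M] [Finite M] [DistribMulAction G M],
      Nat.card M ≤ k → (∃ j, Nat.card M = p ^ j) → Nontrivial M →
      AddSubgroup.closure {x : M | ∃ (g : G) (m : M), x = g • m - m} ≠ ⊤ := by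
  haveI := Fact.mk hp
  intro k
  induction k with
  | zero =>
    intro M _ _ _ hcard _ hnt
    have : 0 < Nat.card M := Nat.card_pos
    omega
  | succ k ih =>
    intro M _ _ _ hcard hpow hnt
    obtain ⟨j, hj⟩ := hpow
    set Fix : AddSubgroup M :=
      { carrier := fixedPoints G M
        zero_mem' := fun g => smul_zero g
        add_mem' := fun {a b} ha hb g => by
          rw [smul_add, ha g, hb g]
        neg_mem' := fun {a} ha g => by
          rw [smul_neg, ha g] } with hFixdef
    have hmemFix : ∀ m : M, m ∈ Fix ↔ ∀ g : G, g • m = m := fun m => Iff.rfl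
    have hpM : p ∣ Nat.card M := by
      rcases Nat.eq_zero_or_pos j with rfl | hjpos
      · exfalso
        rw [pow_zero] at hj
        exact (Finite.one_lt_card (α := M)).ne' hj
      · exact hj ▸ dvd_pow_self p hjpos.ne'
    have h0fix : (0 : M) ∈ fixedPoints G M := fun g => smul_zero g
    obtain ⟨b, hbfix, hb0⟩ :=
      hG.exists_fixed_point_of_prime_dvd_card_of_fixed_point (α := M) hpM h0fix
    by_cases hFixtop : Fix = ⊤
    · intro htop
      obtain ⟨x, hx⟩ := exists_ne (0 : M)
      have hxmem : x ∈ AddSubgroup.closure {x : M | ∃ (g : G) (m : M), x = g • m - m} := by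
        rw [htop]; trivial
      have hle : AddSubgroup.closure {x : M | ∃ (g : G) (m : M), x = g • m - m}
          ≤ (⊥ : AddSubgroup M) := by
        refine (AddSubgroup.closure_le _).mpr ?_
        rintro y ⟨g, m, rfl⟩
        have hm : g • m = m := (hmemFix m).mp (hFixtop ▸ AddSubgroup.mem_top m) g
        simp [hm]
      exact hx (AddSubgroup.mem_bot.mp (hle hxmem))
    · have hFixbot : Fix ≠ ⊥ := by
        intro hbot
        have hbF : b ∈ Fix := hbfix
        rw [hbot, AddSubgroup.mem_bot] at hbF
        exact hb0 hbF.symm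
      letI : SMul G (M ⧸ Fix) :=
        ⟨fun g => QuotientAddGroup.map Fix Fix (DistribMulAction.toAddMonoidHom M g)
          (fun m hm => by
            have hfix : g • m = m := (hmemFix m).mp hm g
            show g • m ∈ Fix
            rw [hfix]; exact hm)⟩
      have hsmul_mk : ∀ (g : G) (m : M),
          g • (QuotientAddGroup.mk m : M ⧸ Fix) = QuotientAddGroup.mk (g • m) :=
        fun g m => rfl
      letI : MulAction G (M ⧸ Fix) :=
        { one_smul := fun q => QuotientAddGroup.induction_on q (fun m => by
            rw [hsmul_mk, one_smul])
          mul_smul := fun g h q => QuotientAddGroup.induction_on q (fun m => by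
            rw [hsmul_mk, hsmul_mk, hsmul_mk, mul_smul]) }
      letI : DistribMulAction G (M ⧸ Fix) :=
        { smul_zero := fun g => by
            show g • (QuotientAddGroup.mk 0 : M ⧸ Fix) = QuotientAddGroup.mk 0
            rw [hsmul_mk, smul_zero]
          smul_add := fun g q r => QuotientAddGroup.induction_on q (fun m =>
            QuotientAddGroup.induction_on r (fun m' => by
              show g • (QuotientAddGroup.mk (m + m') : M ⧸ Fix) = _
              rw [hsmul_mk, smul_add]
              rfl)) }
      have hcardeq : Nat.card M = Nat.card (M ⧸ Fix) * Nat.card Fix :=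
        AddSubgroup.card_eq_card_quotient_mul_card_addSubgroup Fix
      haveI hFixnt : Nontrivial Fix := (AddSubgroup.nontrivial_iff_ne_bot Fix).mpr hFixbot
      have hFixgt : 1 < Nat.card Fix := Finite.one_lt_card
      have hQpos : 0 < Nat.card (M ⧸ Fix) := Nat.card_pos
      have hQlt : Nat.card (M ⧸ Fix) < Nat.card M := by
        rw [hcardeq]
        exact (Nat.lt_mul_iff_one_lt_right hQpos).mpr hFixgt
      have hQle : Nat.card (M ⧸ Fix) ≤ k := by omega
      have hQpow : ∃ j', Nat.card (M ⧸ Fix) = p ^ j' := by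
        have hdvd : Nat.card (M ⧸ Fix) ∣ p ^ j := hj ▸ ⟨Nat.card Fix, hcardeq⟩
        obtain ⟨j', _, hj'⟩ := (Nat.dvd_prime_pow hp).mp hdvd
        exact ⟨j', hj'⟩
      have hQnt : Nontrivial (M ⧸ Fix) := by
        have hex : ∃ m : M, m ∉ Fix := by
          by_contra h
          push_neg at h
          exact hFixtop ((AddSubgroup.eq_top_iff' Fix).mpr h)
        obtain ⟨m, hm⟩ := hex
        exact ⟨QuotientAddGroup.mk m, 0, by rwa [ne_eq, QuotientAddGroup.eq_zero_iff]⟩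
      have hQ := ih (M ⧸ Fix) hQle hQpow hQnt
      intro htop
      apply hQ
      have hsurj : Function.Surjective (QuotientAddGroup.mk' Fix) :=
        QuotientAddGroup.mk'_surjective Fix
      rw [eq_top_iff]
      calc (⊤ : AddSubgroup (M ⧸ Fix))
          = AddSubgroup.map (QuotientAddGroup.mk' Fix) ⊤ :=
            (AddSubgroup.map_top_of_surjective _ hsurj).symm
        _ = AddSubgroup.map (QuotientAddGroup.mk' Fix)
              (AddSubgroup.closure {x : M | ∃ (g : G) (m : M), x = g • m - m}) := by
            rw [htop]
        _ = AddSubgroup.closure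
              ((QuotientAddGroup.mk' Fix) '' {x : M | ∃ (g : G) (m : M), x = g • m - m}) :=
            AddMonoidHom.map_closure _ _
        _ ≤ AddSubgroup.closure {x : M ⧸ Fix | ∃ (g : G) (m : M ⧸ Fix), x = g • m - m} := by
            refine AddSubgroup.closure_mono ?_
            rintro x ⟨y, ⟨g, m, rfl⟩, rfl⟩
            exact ⟨g, QuotientAddGroup.mk m, by rw [map_sub, hsmul_mk]; rfl⟩

end Coinv
section Rump

namespace LeftBrace

/-- Type synonym carrying the multiplicative group `(A, ∘)`. -/
def CircG (A : Type*) := A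

variable {A : Type*} [LeftBrace A]

/-- Interpret an element of the type synonym back in `A`. -/
def ofCircG : CircG A → A := id

/-- Interpret an element of `A` in the type synonym. -/
def toCircG : A → CircG A := id

instance : Group (CircG A) where
  mul a b := toCircG (circ (ofCircG a) (ofCircG b))
  one := toCircG 0
  inv a := toCircG (inv (ofCircG a))
  mul_assoc a b c := circ_assoc (ofCircG a) (ofCircG b) (ofCircG c)
  one_mul a := zero_circ (ofCircG a)
  mul_one a := circ_zero (ofCircG a)
  inv_mul_cancel a := inv_circ (ofCircG a)

instance instCircGAction : DistribMulAction (CircG A) A where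
  smul g b := lamHom (ofCircG g) b
  one_smul b := by
    show lamHom (0 : A) b = b
    show circ 0 b - 0 = b
    rw [zero_circ, sub_zero]
  mul_smul g h b := lamHom_circ (ofCircG g) (ofCircG h) b
  smul_zero g := map_zero _
  smul_add g := map_add _

lemma circG_smul_def (g : CircG A) (b : A) : g • b = lamHom (ofCircG g) b := rfl

variable {p n : ℕ}

lemma isPGroup_circG (hcard : Nat.card A = p ^ n) :
    IsPGroup p (CircG A) :=
  IsPGroup.of_card (show Nat.card (CircG A) = p ^ n from hcard)

/-- If `B` is a `λ`-invariant nonzero additive subgroup, then `A * B` is strictly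
smaller than `B`. -/
lemma subStar_lt [Fintype A] (hp : p.Prime) (hcard : Nat.card A = p ^ n)
    (B : AddSubgroup A) (hinv : ∀ (a : A), ∀ x ∈ B, lamHom a x ∈ B) (hB : B ≠ ⊥) :
    subStar ⊤ B < B := by
  have hle : subStar ⊤ B ≤ B := by
    refine (AddSubgroup.closure_le _).mpr ?_
    rintro x ⟨a, -, b, hb, rfl⟩
    rw [star_eq]
    exact sub_mem (hinv a b hb) hb
  refine lt_of_le_of_ne hle ?_
  intro heq
  -- set up the action of (A,∘) on B
  letI : DistribMulAction (CircG A) B :=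
    { smul := fun g b => ⟨lamHom (ofCircG g) (b : A), hinv _ _ b.2⟩
      one_smul := fun b => Subtype.ext (by
        show lamHom (0 : A) (b : A) = b
        show circ 0 (b : A) - 0 = b
        rw [zero_circ, sub_zero])
      mul_smul := fun g h b => Subtype.ext (lamHom_circ (ofCircG g) (ofCircG h) b)
      smul_zero := fun g => Subtype.ext (map_zero _)
      smul_add := fun g b c => Subtype.ext (map_add _ _ _) }
  have hsmul_coe : ∀ (g : CircG A) (b : B), ((g • b : B) : A) = lamHom (ofCircG g) (b : A) :=
    fun g b => rfl
  haveI : Nontrivial B := (AddSubgroup.nontrivial_iff_ne_bot B).mpr hB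
  have hBpow : ∃ j, Nat.card B = p ^ j := by
    have hdvd : Nat.card B ∣ p ^ n := hcard ▸ AddSubgroup.card_addSubgroup_dvd_card B
    obtain ⟨j, -, hj⟩ := (Nat.dvd_prime_pow hp).mp hdvd
    exact ⟨j, hj⟩
  have hcoinv := coinvariants_ne_top hp (isPGroup_circG hcard) (Nat.card B) B
    le_rfl hBpow inferInstance
  apply hcoinv
  -- transfer the equality `subStar ⊤ B = B` into `B`
  have hmapinj : Function.Injective (AddSubgroup.map B.subtype) :=
    AddSubgroup.map_injective B.subtype_injective
  apply hmapinj
  rw [AddMonoidHom.map_closure]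
  have himage : (B.subtype '' {x : B | ∃ (g : CircG A) (m : B), x = g • m - m})
      = {x : A | ∃ a ∈ (⊤ : AddSubgroup A), ∃ b ∈ B, x = star a b} := by
    ext x
    constructor
    · rintro ⟨y, ⟨g, m, rfl⟩, rfl⟩
      refine ⟨ofCircG g, trivial, (m : A), m.2, ?_⟩
      rw [star_eq]
      rfl
    · rintro ⟨a, -, b, hb, rfl⟩
      refine ⟨toCircG a • ⟨b, hb⟩ - ⟨b, hb⟩, ⟨toCircG a, ⟨b, hb⟩, rfl⟩, ?_⟩
      rw [star_eq]
      rfl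
  rw [himage, ← AddMonoidHom.range_eq_map, AddSubgroup.range_subtype]
  exact heq

end LeftBrace

end Rump
section Rump2

namespace LeftBrace

variable {A : Type*} [LeftBrace A] [Fintype A] {p n : ℕ}

lemma leftPow_card_bound (hp : p.Prime) (hcard : Nat.card A = p ^ n) (m : ℕ) :
    leftPow A m = ⊥ ∨ p ^ m * Nat.card (leftPow A m) ≤ p ^ n := by
  induction m with
  | zero =>
    right
    have h0 : leftPow A 0 = (⊤ : AddSubgroup A) := rfl
    rw [pow_zero, one_mul, h0, AddSubgroup.card_top, hcard]
  | succ m ih =>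
    rcases ih with h | h
    · left
      rw [eq_bot_iff, ← h]
      exact leftPow_succ_le m
    · by_cases hbot : leftPow A m = ⊥
      · left
        rw [eq_bot_iff, ← hbot]
        exact leftPow_succ_le m
      · right
        have hlt : leftPow A (m + 1) < leftPow A m :=
          subStar_lt hp hcard (leftPow A m) (fun a x hx => lamHom_mem_leftPow a hx) hbot
        have hdvd : Nat.card (leftPow A (m + 1)) ∣ Nat.card (leftPow A m) :=
          AddSubgroup.card_dvd_of_le hlt.le
        obtain ⟨d, hd⟩ := hdvd
        have hne : Nat.card (leftPow A (m + 1)) ≠ Nat.card (leftPow A m) := by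
          intro habs
          exact hlt.ne (AddSubgroup.eq_of_le_of_card_ge hlt.le habs.ge)
        have hdp : p ∣ d := by
          have hdvdpow : d ∣ p ^ n := by
            have h1 : d ∣ Nat.card (leftPow A m) := ⟨Nat.card (leftPow A (m + 1)), by rw [hd]; ring⟩
            have h2 : Nat.card (leftPow A m) ∣ p ^ n :=
              hcard ▸ AddSubgroup.card_addSubgroup_dvd_card _
            exact h1.trans h2
          obtain ⟨e, he, rfl⟩ := (Nat.dvd_prime_pow hp).mp hdvdpow
          rcases Nat.eq_zero_or_pos e with rfl | hepos
          · exfalso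
            apply hne
            rw [hd, pow_zero, mul_one]
          · exact dvd_pow_self p hepos.ne'
        have hpos : 0 < Nat.card (leftPow A (m + 1)) := Nat.card_pos
        have hcardmpos : 0 < Nat.card (leftPow A m) := Nat.card_pos
        have hdpos : 0 < d := by
          rcases Nat.eq_zero_or_pos d with rfl | h
          · rw [mul_zero] at hd; omega
          · exact h
        calc p ^ (m + 1) * Nat.card (leftPow A (m + 1))
            = p ^ m * (p * Nat.card (leftPow A (m + 1))) := by ring
          _ ≤ p ^ m * (d * Nat.card (leftPow A (m + 1))) := by
              exact Nat.mul_le_mul_left _ (Nat.mul_le_mul_right _ (Nat.le_of_dvd hdpos hdp))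
          _ = p ^ m * Nat.card (leftPow A m) := by rw [hd]; ring
          _ ≤ p ^ n := h

lemma leftPow_n_eq_bot (hp : p.Prime) (hcard : Nat.card A = p ^ n) :
    leftPow A n = ⊥ := by
  rcases leftPow_card_bound hp hcard n with h | h
  · exact h
  · have hpos : 0 < p ^ n := pow_pos hp.pos n
    have hcardle : Nat.card (leftPow A n) ≤ 1 := by
      by_contra habs
      push_neg at habs
      nlinarith
    exact AddSubgroup.eq_bot_of_card_le _ hcardle

end LeftBrace

end Rump2
section Key

namespace LeftBrace

variable {A : Type*} [LeftBrace A]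

lemma iterate_map_nsmul (f : A →+ A) (k m : ℕ) (c : A) :
    (⇑f)^[k] (m • c) = m • (⇑f)^[k] c := by
  induction k with
  | zero => rfl
  | succ k ih => rw [Function.iterate_succ_apply', Function.iterate_succ_apply', ih, map_nsmul]

lemma iterate_map_zero (f : A →+ A) (k : ℕ) : (⇑f)^[k] (0 : A) = 0 := by
  induction k with
  | zero => rfl
  | succ k ih => rw [Function.iterate_succ_apply', ih, map_zero]

variable [Fintype A] {p n : ℕ}

lemma key_star_ann (hp : p.Prime) (hpn : n + 1 < p) (hcard : Nat.card A = p ^ n)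
    (i : ℕ) (x : A) (hx : p ^ i • x = 0) (c : A) : p ^ i • star x c = 0 := by
  set f : A →+ A := starHom x with hf
  have hbot : leftPow A n = ⊥ := leftPow_n_eq_bot hp hcard
  have hiter_zero : ∀ k : ℕ, n ≤ k → ∀ b : A, (⇑f)^[k] b = 0 := by
    intro k hk b
    have : (⇑f)^[k] b ∈ leftPow A k := starHom_iterate_mem x b k
    have := leftPow_le_of_le hk this
    rwa [hbot, AddSubgroup.mem_bot] at this
  have hsmul_iter : ∀ (k : ℕ) (b : A), p ^ i • (⇑f)^[k] b = (⇑f)^[k] (p ^ i • b) :=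
    fun k b => (iterate_map_nsmul f k _ b).symm
  -- Step B : `x^{∘ p^i} = 0`
  have hcircPow : circPow x (p ^ i) = 0 := by
    rw [circPow_eq]
    refine Finset.sum_eq_zero ?_
    intro k hk
    rcases Nat.lt_or_ge k n with hkn | hkn
    · have hdvd : p ^ i ∣ (p ^ i).choose (k + 1) :=
        pow_dvd_choose hp i (k + 1) (by omega) (by omega)
      obtain ⟨q, hq⟩ := hdvd
      rw [hq, mul_comm, mul_smul, hsmul_iter, hx, iterate_map_zero, smul_zero]
    · rw [hiter_zero k hkn x, smul_zero]
  -- Step C : the vanishing identity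
  have hident : ∀ c : A,
      ∑ k ∈ Finset.range (p ^ i), ((p ^ i).choose (k + 1)) • (⇑f)^[k + 1] c = 0 := by
    intro c
    have h1 := star_circPow x c (p ^ i)
    rw [hcircPow, star_zero_left] at h1
    have h2 : ∀ k ∈ Finset.range (p ^ i),
        ((p ^ i).choose (k + 1)) • (⇑f)^[k] (star x c)
          = ((p ^ i).choose (k + 1)) • (⇑f)^[k + 1] c := by
      intro k _
      rw [← starHom_apply, ← hf, ← Function.iterate_succ_apply]
    rw [Finset.sum_congr rfl h2] at h1
    exact h1.symm
  -- Step D : downward induction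
  have hdown : ∀ d j : ℕ, n ≤ j + d → ∀ c : A, p ^ i • (⇑f)^[j + 1] c = 0 := by
    intro d
    induction d with
    | zero =>
      intro j hj c
      rw [hiter_zero (j + 1) (by omega) c, smul_zero]
    | succ d ih =>
      intro j hj c
      have hN : 1 ≤ p ^ i := Nat.one_le_pow _ _ hp.pos
      have hsplit := hident ((⇑f)^[j] c)
      obtain ⟨N', hN'⟩ : ∃ N', p ^ i = N' + 1 := ⟨p ^ i - 1, by omega⟩
      rw [hN'] at hsplit
      rw [Finset.sum_range_succ'] at hsplit
      have hzero : ∀ k ∈ Finset.range N',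
          (((N' + 1)).choose (k + 1 + 1)) • (⇑f)^[k + 1 + 1] ((⇑f)^[j] c) = 0 := by
        intro k hk
        have hiter : (⇑f)^[k + 1 + 1] ((⇑f)^[j] c) = (⇑f)^[(k + j + 1) + 1] c := by
          rw [← Function.iterate_add_apply]
          congr 1
          omega
        rw [hiter]
        rcases Nat.lt_or_ge (k + j + 2) n with hlt | hge
        · -- use divisibility and the inner induction hypothesis
          have hdvd : p ^ i ∣ (p ^ i).choose (k + 2) :=
            pow_dvd_choose hp i (k + 2) (by omega) (by omega)
          rw [← hN']
          have hC : (p ^ i).choose (k + 1 + 1) = (p ^ i).choose (k + 2) := by norm_num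
          obtain ⟨q, hq⟩ := hdvd
          rw [hC, hq, mul_comm, mul_smul, ih (k + j + 1) (by omega) c, smul_zero]
        · rw [hiter_zero ((k + j + 1) + 1) (by omega) c, smul_zero]
      rw [Finset.sum_congr rfl hzero, Finset.sum_const_zero, zero_add] at hsplit
      have hfirst : (⇑f)^[0 + 1] ((⇑f)^[j] c) = (⇑f)^[j + 1] c := by
        rw [← Function.iterate_add_apply]
        congr 1
        omega
      rw [hfirst, Nat.choose_one_right, ← hN'] at hsplit
      exact hsplit
  have := hdown n 0 (by omega) c
  rwa [Function.iterate_one, hf, starHom_apply] at this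

end LeftBrace

end Key
section Main

namespace LeftBrace

variable {A : Type*} [LeftBrace A]

lemma conj_formula (a x : A) :
    circ (circ a x) (inv a) = lamHom a x + lamHom a (star x (inv a)) := by
  have h1 : circ (circ a x) (inv a) = circ a (circ x (inv a)) := circ_assoc a x (inv a)
  have h2 : circ x (inv a) = x + lamHom x (inv a) := circ_eq x (inv a)
  have h3 : lamHom x (inv a) = star x (inv a) + inv a := by
    rw [star_eq]; abel
  have h4 : a + lamHom a (inv a) = 0 := by
    rw [← circ_eq, circ_inv]
  rw [h1, circ_eq, h2, h3]
  rw [map_add, map_add]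
  have := h4
  -- circ a (x + (star x (inv a) + inv a)) expanded
  calc a + (lamHom a x + (lamHom a (star x (inv a)) + lamHom a (inv a)))
      = lamHom a x + lamHom a (star x (inv a)) + (a + lamHom a (inv a)) := by abel
    _ = lamHom a x + lamHom a (star x (inv a)) := by rw [h4, add_zero]

end LeftBrace

end Main

open LeftBrace in
/-- in a left brace of cardinality `p^n` with `p > n+1` prime, the
set of elements killed by `p^i` is an ideal, for every `i`. -/
theorem ann_isIdeal (p n : ℕ) (hp : p.Prime) (hpn : n + 1 < p)
    (A : Type*) [LeftBrace A] [Fintype A] (hcard : Nat.card A = p ^ n) (i : ℕ) :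
    IsIdeal {a : A | p ^ i • a = 0} := by
  refine ⟨?_, ?_, ?_, ?_, ?_, ?_⟩
  · show p ^ i • (0 : A) = 0
    rw [smul_zero]
  · intro x hx y hy
    show p ^ i • (x + y) = 0
    rw [smul_add, hx, hy, add_zero]
  · intro x hx
    show p ^ i • (-x) = 0
    rw [smul_neg, hx, neg_zero]
  · intro a x hx
    show p ^ i • star a x = 0
    have hx' : p ^ i • x = 0 := hx
    rw [star_eq, smul_sub, ← map_nsmul, hx', map_zero, zero_sub, neg_zero]
  · intro a x hx
    exact key_star_ann hp hpn hcard i x hx a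
  · intro a x hx
    show p ^ i • circ (circ a x) (inv a) = 0
    have hx' : p ^ i • x = 0 := hx
    rw [conj_formula, smul_add, ← map_nsmul, hx', map_zero, zero_add, ← map_nsmul,
      key_star_ann hp hpn hcard i x hx' (inv a), map_zero]
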